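/- arXiv:cs/0503071 — 2 statements merged into one kernel-verified Lean document; each statement's English description precedes it below -/
import Mathlib

section
/- Let μ be a compactly supported Borel probability measure on ℝ^d and X ~ μ. For every r ∈ (0,1], E[ 1 / (n · μ(B_r(X))) ] ≤ c / (n r^d) for a constant c depending only on d and the support of μ (with the convention that the integrand is treated via the covering bound and μ(B_r(X)) > 0 μ-almost surely). -/
open MeasureTheory Metric ENNReal

/-- For a compactly supported Borel probability measure `μ` on `ℝ^d`, there is a constant `c`
(depending only on `d` and the support) with
`E[1/(n μ(B_r(X)))] ≤ c/(n r^d)` for all `r ∈ (0,1]` and `n ≥ 1`. -/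
theorem stmt_6 (d : ℕ) (μ : Measure (EuclideanSpace ℝ (Fin d))) [IsProbabilityMeasure μ]
    (S : Set (EuclideanSpace ℝ (Fin d))) (hS : IsCompact S) (hfull : μ Sᶜ = 0) :
    ∃ c : ENNReal, 0 < c ∧ c ≠ ⊤ ∧ ∀ r : ℝ, 0 < r → r ≤ 1 → ∀ n : ℕ, 0 < n →
      (∫⁻ x, ((n : ENNReal) * μ (closedBall x r))⁻¹ ∂μ)
        ≤ c / ((n : ENNReal) * ENNReal.ofReal (r ^ d)) := by
  classical
  set K : Set (EuclideanSpace ℝ (Fin d)) := cthickening 1 S with hKdef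
  have hKc : IsCompact K := hS.cthickening
  have hKvol : volume K ≠ ⊤ := hKc.measure_lt_top.ne
  set B1 : ENNReal := volume (ball (0 : EuclideanSpace ℝ (Fin d)) 1) with hB1def
  have hB1pos : 0 < B1 := measure_ball_pos _ _ one_pos
  have hB1top : B1 ≠ ⊤ := measure_ball_lt_top.ne
  set T : ENNReal := ENNReal.ofReal (2 ^ d) with hTdef
  have hTpos : T ≠ 0 := (ENNReal.ofReal_pos.mpr (by positivity)).ne'
  have hTtop : T ≠ ⊤ := ENNReal.ofReal_ne_top
  set c0 : ENNReal := volume K * T / B1 with hc0def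
  have hc0top : c0 ≠ ⊤ := by
    rw [hc0def]
    exact (ENNReal.div_lt_top (ENNReal.mul_ne_top hKvol hTtop) hB1pos.ne').ne
  refine ⟨c0 + 1, lt_of_lt_of_le zero_lt_one le_add_self,
    ENNReal.add_ne_top.mpr ⟨hc0top, ENNReal.one_ne_top⟩, ?_⟩
  intro r hr hr1 n hn
  have hn0 : (n : ENNReal) ≠ 0 := by exact_mod_cast Nat.cast_ne_zero.mpr hn.ne'
  have hntop : (n : ENNReal) ≠ ⊤ := ENNReal.natCast_ne_top n
  have hrb : (0 : ℝ) < r / 2 := by linarith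
  set R : ENNReal := ENNReal.ofReal (r ^ d) with hRdef
  have hRpos : R ≠ 0 := (ENNReal.ofReal_pos.mpr (by positivity)).ne'
  have hRtop : R ≠ ⊤ := ENNReal.ofReal_ne_top
  -- measurability of x ↦ μ (closedBall x r)
  have hmb : Measurable (fun x : EuclideanSpace ℝ (Fin d) => μ (closedBall x r)) := by
    have hs : MeasurableSet {p : EuclideanSpace ℝ (Fin d) × EuclideanSpace ℝ (Fin d) |
        dist p.1 p.2 ≤ r} := (isClosed_le continuous_dist continuous_const).measurableSet
    have h := measurable_measure_prodMk_left (ν := μ) hs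
    have he : ∀ x : EuclideanSpace ℝ (Fin d),
        (Prod.mk x ⁻¹' {p : EuclideanSpace ℝ (Fin d) × EuclideanSpace ℝ (Fin d) |
          dist p.1 p.2 ≤ r}) = closedBall x r := by
      intro x; ext y; simp [mem_closedBall, dist_comm]
    simpa [he] using h
  set g : EuclideanSpace ℝ (Fin d) → ENNReal :=
    S.indicator (fun x => (μ (closedBall x r))⁻¹) with hgdef
  have hg : Measurable g := hmb.inv.indicator hS.isClosed.measurableSet
  have hae : ∀ᵐ x ∂μ, x ∈ S := by
    rw [MeasureTheory.ae_iff]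
    exact hfull
  -- Step A
  have stepA : (∫⁻ x, ((n : ENNReal) * μ (closedBall x r))⁻¹ ∂μ)
      = (n : ENNReal)⁻¹ * ∫⁻ x, g x ∂μ := by
    rw [← lintegral_const_mul' _ _ (ENNReal.inv_ne_top.mpr hn0)]
    apply lintegral_congr_ae
    filter_upwards [hae] with x hx
    rw [ENNReal.mul_inv (Or.inl hn0) (Or.inl hntop), hgdef, Set.indicator_of_mem hx]
  -- Step B
  set volB : ENNReal := volume (closedBall (0 : EuclideanSpace ℝ (Fin d)) (r / 2)) with hvolBdef
  have hvolBpos : volB ≠ 0 := (measure_closedBall_pos _ _ hrb).ne'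
  have hvolBtop : volB ≠ ⊤ := measure_closedBall_lt_top.ne
  set F : EuclideanSpace ℝ (Fin d) → EuclideanSpace ℝ (Fin d) → ENNReal :=
    fun x y => {p : EuclideanSpace ℝ (Fin d) × EuclideanSpace ℝ (Fin d) |
      dist p.2 p.1 ≤ r / 2}.indicator (fun _ => (1 : ENNReal)) (x, y) * g x with hFdef
  have hsF : MeasurableSet {p : EuclideanSpace ℝ (Fin d) × EuclideanSpace ℝ (Fin d) |
      dist p.2 p.1 ≤ r / 2} :=
    (isClosed_le (continuous_dist.comp (continuous_snd.prodMk continuous_fst))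
      continuous_const).measurableSet
  have hFmeas : AEMeasurable (Function.uncurry F) (μ.prod volume) :=
    ((measurable_one.indicator hsF).mul (hg.comp measurable_fst)).aemeasurable
  have key : ∀ x, g x = volB⁻¹ * ∫⁻ y, F x y ∂volume := by
    intro x
    have hset : (fun y => ({p : EuclideanSpace ℝ (Fin d) × EuclideanSpace ℝ (Fin d) |
        dist p.2 p.1 ≤ r / 2}.indicator (fun _ => (1 : ENNReal)) (x, y)))
        = (closedBall x (r / 2)).indicator (fun _ => (1 : ENNReal)) := by
      ext y
      by_cases h : dist y x ≤ r / 2 <;>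
        simp [Set.indicator_apply, h, mem_closedBall]
    have hint : (∫⁻ y, F x y ∂volume) = volB * g x := by
      rw [hFdef]
      simp only
      rw [lintegral_mul_const _
        (by rw [hset]; exact measurable_one.indicator measurableSet_closedBall)]
      rw [hset, lintegral_indicator_const measurableSet_closedBall, one_mul, hvolBdef,
        Measure.addHaar_closedBall_center volume x]
    rw [hint, ← mul_assoc, ENNReal.inv_mul_cancel hvolBpos hvolBtop, one_mul]
  have inner : ∀ y, (∫⁻ x, F x y ∂μ) ≤ K.indicator (fun _ => (1 : ENNReal)) y := by
    intro y
    by_cases hy : y ∈ K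
    · have hb : ∀ x, F x y ≤ (closedBall y (r / 2)).indicator
          (fun _ => (μ (closedBall y (r / 2)))⁻¹) x := by
        intro x
        by_cases hxy : dist y x ≤ r / 2
        · have hx' : x ∈ closedBall y (r / 2) := by
            rw [mem_closedBall, dist_comm]; exact hxy
          have hsub : closedBall y (r / 2) ⊆ closedBall x r :=
            closedBall_subset_closedBall' (by rw [dist_comm] at hxy ⊢; linarith)
          calc F x y = g x := by
                rw [hFdef]; simp only
                rw [Set.indicator_of_mem (by exact hxy), one_mul]
            _ ≤ (μ (closedBall x r))⁻¹ := Set.indicator_le_self _ _ x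
            _ ≤ (μ (closedBall y (r / 2)))⁻¹ :=
                ENNReal.inv_le_inv' (measure_mono hsub)
            _ = (closedBall y (r / 2)).indicator
                (fun _ => (μ (closedBall y (r / 2)))⁻¹) x := by
                rw [Set.indicator_of_mem hx']
        · rw [hFdef]; simp only
          rw [Set.indicator_of_notMem (by exact hxy), zero_mul]
          exact zero_le
      calc (∫⁻ x, F x y ∂μ) ≤ ∫⁻ x, (closedBall y (r / 2)).indicator
            (fun _ => (μ (closedBall y (r / 2)))⁻¹) x ∂μ := lintegral_mono hb
        _ = (μ (closedBall y (r / 2)))⁻¹ * μ (closedBall y (r / 2)) := by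
            rw [lintegral_indicator_const measurableSet_closedBall]
        _ ≤ 1 := by
            rcases eq_or_ne (μ (closedBall y (r / 2))) 0 with h0 | h0
            · simp [h0]
            · rw [ENNReal.inv_mul_cancel h0 (measure_ne_top μ _)]
        _ = K.indicator (fun _ => (1 : ENNReal)) y := by
            rw [Set.indicator_of_mem hy]
    · have hb : ∀ x, F x y = 0 := by
        intro x
        rw [hFdef]; simp only
        by_cases hxS : x ∈ S
        · by_cases hxy : dist y x ≤ r / 2
          · exact absurd (Metric.mem_cthickening_of_dist_le y x 1 S hxS (by linarith)) hy
          · rw [Set.indicator_of_notMem (by exact hxy), zero_mul]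
        · rw [hgdef, Set.indicator_of_notMem hxS, mul_zero]
      simp [lintegral_congr hb, Set.indicator_of_notMem hy]
  have stepB : (∫⁻ x, g x ∂μ) ≤ volB⁻¹ * volume K := by
    calc (∫⁻ x, g x ∂μ) = volB⁻¹ * ∫⁻ x, ∫⁻ y, F x y ∂volume ∂μ := by
          rw [← lintegral_const_mul' _ _ (ENNReal.inv_ne_top.mpr hvolBpos)]
          exact lintegral_congr key
      _ = volB⁻¹ * ∫⁻ y, ∫⁻ x, F x y ∂μ ∂volume := by
          rw [lintegral_lintegral_swap hFmeas]
      _ ≤ volB⁻¹ * ∫⁻ y, K.indicator (fun _ => (1 : ENNReal)) y ∂volume :=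
          mul_le_mul_right (lintegral_mono inner) _
      _ = volB⁻¹ * volume K := by
          rw [lintegral_indicator_const hKc.isClosed.measurableSet, one_mul]
  -- Step C : algebra
  have hvolB_eq : volB = R / T * B1 := by
    rw [hvolBdef, Measure.addHaar_closedBall _ _ hrb.le, finrank_euclideanSpace_fin,
      hRdef, hTdef, ← ENNReal.ofReal_div_of_pos (by positivity), div_pow]
  have hC : volB⁻¹ * volume K ≤ c0 / R := by
    rw [hvolB_eq, hc0def]
    rw [ENNReal.mul_inv (Or.inl (by
        simp only [ne_eq, ENNReal.div_eq_zero_iff, hTtop, or_false]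
        exact hRpos)) (Or.inl (by
        exact (ENNReal.div_lt_top hRtop hTpos).ne))]
    rw [ENNReal.inv_div (Or.inl hTtop) (Or.inl hTpos)]
    rw [div_eq_mul_inv, div_eq_mul_inv, div_eq_mul_inv]
    apply le_of_eq
    ring
  have hfinal : (n : ENNReal)⁻¹ * (c0 / R) ≤ (c0 + 1) / ((n : ENNReal) * R) := by
    rw [div_eq_mul_inv c0 R, div_eq_mul_inv (c0+1), ENNReal.mul_inv (Or.inl hn0) (Or.inl hntop)]
    calc (n : ENNReal)⁻¹ * (c0 * R⁻¹) ≤ (n : ENNReal)⁻¹ * ((c0 + 1) * R⁻¹) := by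
          gcongr; exact le_self_add
      _ = (c0 + 1) * ((n : ENNReal)⁻¹ * R⁻¹) := by ring
  calc (∫⁻ x, ((n : ENNReal) * μ (closedBall x r))⁻¹ ∂μ)
      = (n : ENNReal)⁻¹ * ∫⁻ x, g x ∂μ := stepA
    _ ≤ (n : ENNReal)⁻¹ * (volB⁻¹ * volume K) := mul_le_mul_right stepB _
    _ ≤ (n : ENNReal)⁻¹ * (c0 / R) := mul_le_mul_right hC _
    _ ≤ (c0 + 1) / ((n : ENNReal) * R) := hfinal
end

section
/- Let X ~ μ be an ℝ^d-valued random variable, and let r_n → 0 and a_n → ∞ be sequences of positive reals with (r_n)^d a_n → ∞. Then a_n · μ(B_{r_n}(X)) → ∞ in probability, i.e., for every M > 0, P( a_n μ(B_{r_n}(X)) ≤ M ) → 0. -/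
open MeasureTheory Metric Filter Set
open scoped ENNReal

/-- Measurability of `x ↦ μ (closedBall x ρ)`. -/
lemma meas_ball_aux (d : ℕ) (μ : Measure (EuclideanSpace ℝ (Fin d))) [SFinite μ] (ρ : ℝ) :
    Measurable fun x : EuclideanSpace ℝ (Fin d) => μ (closedBall x ρ) := by
  have hs : MeasurableSet {p : EuclideanSpace ℝ (Fin d) × EuclideanSpace ℝ (Fin d) |
      dist p.2 p.1 ≤ ρ} :=
    (isClosed_le (continuous_snd.dist continuous_fst) continuous_const).measurableSet
  have h := measurable_measure_prodMk_left (ν := μ) hs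
  convert h using 2 with x
  rfl

/-- Key covering-free bound: the measure of points in `B_R(0)` whose `2s`-ball has
`μ`-measure at most `t` is at most `t · vol(B_{R+s}) / vol(B_s)`. -/
lemma key_bound (d : ℕ) (μ : Measure (EuclideanSpace ℝ (Fin d))) [IsProbabilityMeasure μ]
    (s R : ℝ) (hs : 0 < s) (t : ℝ≥0∞) (ht0 : t ≠ 0) (ht : t ≠ ∞) :
    μ (closedBall 0 R ∩ {x | μ (closedBall x (2 * s)) ≤ t})
      ≤ t * volume (closedBall (0 : EuclideanSpace ℝ (Fin d)) (R + s))
        / volume (closedBall (0 : EuclideanSpace ℝ (Fin d)) s) := by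
  set E := EuclideanSpace ℝ (Fin d)
  set ν : Measure E := volume with hν
  set g : E → ℝ≥0∞ := fun y => (μ (closedBall y s))⁻¹ with hgdef
  have hg : Measurable g := (meas_ball_aux d μ s).inv
  have hmeas2 : Measurable fun x : E => μ (closedBall x (2 * s)) := meas_ball_aux d μ (2 * s)
  set T : Set E := closedBall 0 R ∩ {x | μ (closedBall x (2 * s)) ≤ t} with hTdef
  have hT : MeasurableSet T :=
    measurableSet_closedBall.inter (hmeas2 measurableSet_Iic)
  set V : ℝ≥0∞ := ν (closedBall (0 : E) s) with hVdef
  set W : ℝ≥0∞ := ν (closedBall (0 : E) (R + s)) with hWdef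
  have hV0 : V ≠ 0 := (measure_closedBall_pos ν _ hs).ne'
  have hVtop : V ≠ ∞ := measure_closedBall_lt_top.ne
  -- Step 1 : μ T ≤ t * ∫⁻ x in T, (μ (closedBall x (2s)))⁻¹ ∂μ
  have step1 : μ T ≤ t * ∫⁻ x in T, (μ (closedBall x (2 * s)))⁻¹ ∂μ := by
    have h1 : μ T = ∫⁻ _ in T, 1 ∂μ := by simp
    rw [h1, ← lintegral_const_mul t (f := fun x => (μ (closedBall x (2 * s)))⁻¹) hmeas2.inv]
    refine setLIntegral_mono (hmeas2.inv.const_mul t) fun x hx => ?_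
    rcases eq_or_ne (μ (closedBall x (2 * s))) 0 with h0 | h0
    · simp [h0, ENNReal.mul_top ht0]
    · rw [← div_eq_mul_inv]
      rw [ENNReal.le_div_iff_mul_le (Or.inl h0) (Or.inl (measure_ne_top μ _)), one_mul]
      exact hx.2
  -- Step 2 : pointwise bound on the inverse via an integral
  have step2 : ∀ x : E, (μ (closedBall x (2 * s)))⁻¹
      ≤ (∫⁻ y in closedBall x s, g y ∂ν) / V := by
    intro x
    rw [ENNReal.le_div_iff_mul_le (Or.inl hV0) (Or.inl hVtop)]
    calc (μ (closedBall x (2 * s)))⁻¹ * V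
        = ∫⁻ _ in closedBall x s, (μ (closedBall x (2 * s)))⁻¹ ∂ν := by
          rw [setLIntegral_const, Measure.addHaar_closedBall_center ν x]
      _ ≤ ∫⁻ y in closedBall x s, g y ∂ν := by
          refine setLIntegral_mono hg fun y hy => ?_
          refine ENNReal.inv_le_inv' (measure_mono ?_)
          exact closedBall_subset_closedBall' (by
            have := mem_closedBall.1 hy
            linarith)
  -- the double integral
  set F : E → E → ℝ≥0∞ := fun x y => (closedBall x s).indicator g y with hFdef
  have hF : Measurable (Function.uncurry F) := by
    have hset : MeasurableSet {q : E × E | dist q.2 q.1 ≤ s} :=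
      (isClosed_le (continuous_snd.dist continuous_fst)
        continuous_const).measurableSet
    have : Function.uncurry F = {q : E × E | dist q.2 q.1 ≤ s}.indicator (g ∘ Prod.snd) := by
      funext p
      show (closedBall p.1 s).indicator g p.2 = _
      by_cases h : dist p.2 p.1 ≤ s
      · rw [indicator_of_mem (mem_closedBall.2 h), indicator_of_mem (by exact h)]
        rfl
      · rw [indicator_of_notMem (fun hc => h (mem_closedBall.1 hc)),
          indicator_of_notMem (by exact h)]
    rw [this]
    exact (hg.comp measurable_snd).indicator hset
  have step3 : ∫⁻ x in T, (μ (closedBall x (2 * s)))⁻¹ ∂μ ≤ W / V := by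
    calc ∫⁻ x in T, (μ (closedBall x (2 * s)))⁻¹ ∂μ
        ≤ ∫⁻ x in T, (∫⁻ y in closedBall x s, g y ∂ν) / V ∂μ :=
          lintegral_mono fun x => step2 x
      _ = (∫⁻ x in T, ∫⁻ y, F x y ∂ν ∂μ) / V := by
          simp_rw [div_eq_mul_inv, lintegral_mul_const' _ _ (ENNReal.inv_ne_top.2 hV0)]
          congr 1
          refine lintegral_congr fun x => ?_
          rw [← lintegral_indicator measurableSet_closedBall]
      _ = (∫⁻ y, ∫⁻ x in T, F x y ∂μ ∂ν) / V := by
          rw [lintegral_lintegral_swap hF.aemeasurable]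
      _ ≤ W / V := by
          refine ENNReal.div_le_div_right ?_ V
          calc ∫⁻ y, ∫⁻ x in T, F x y ∂μ ∂ν
              ≤ ∫⁻ y, (closedBall (0 : E) (R + s)).indicator 1 y ∂ν := by
                refine lintegral_mono fun y => ?_
                have hFy : ∀ x : E, F x y = (closedBall y s).indicator (fun _ => g y) x := by
                  intro x
                  show (closedBall x s).indicator g y = _
                  by_cases h : dist y x ≤ s
                  · rw [indicator_of_mem (mem_closedBall.2 h),
                      indicator_of_mem (mem_closedBall.2 (by rwa [dist_comm]))]
                  · rw [indicator_of_notMem (fun hc => h (mem_closedBall.1 hc)),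
                      indicator_of_notMem (fun hc => h (by rw [dist_comm]; exact mem_closedBall.1 hc))]
                simp_rw [hFy]
                rw [lintegral_indicator measurableSet_closedBall, setLIntegral_const,
                  Measure.restrict_apply measurableSet_closedBall]
                by_cases hy : y ∈ closedBall (0 : E) (R + s)
                · have h1 : g y * μ (closedBall y s ∩ T) ≤ g y * μ (closedBall y s) := by
                    gcongr
                    exact inter_subset_left
                  refine le_trans h1 ?_
                  rw [indicator_of_mem hy]
                  rcases eq_or_ne (μ (closedBall y s)) 0 with h0 | h0
                  · simp [h0]
                  · simp only [hgdef, Pi.one_apply]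
                    rw [ENNReal.inv_mul_cancel h0 (measure_ne_top μ _)]
                · have hempty : closedBall y s ∩ T = ∅ := by
                    rw [eq_empty_iff_forall_notMem]
                    rintro x ⟨hxy, hxT, -⟩
                    apply hy
                    rw [mem_closedBall] at hxy hxT ⊢
                    calc dist y 0 ≤ dist y x + dist x 0 := dist_triangle _ _ _
                      _ ≤ s + R := add_le_add (by rw [dist_comm]; exact hxy) hxT
                      _ = R + s := add_comm _ _
                  rw [hempty, measure_empty, mul_zero]
                  exact zero_le
            _ = W := by rw [lintegral_indicator_one measurableSet_closedBall]
  calc μ T ≤ t * ∫⁻ x in T, (μ (closedBall x (2 * s)))⁻¹ ∂μ := step1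
    _ ≤ t * (W / V) := by gcongr
    _ = t * W / V := by rw [mul_div_assoc]

/-- If `r_n → 0`, `a_n → ∞` and `a_n r_n^d → ∞`, then `a_n μ(B_{r_n}(X)) → ∞` in probability. -/
theorem stmt_8 (d : ℕ) (μ : Measure (EuclideanSpace ℝ (Fin d))) [IsProbabilityMeasure μ]
    (r a : ℕ → ℝ) (hrpos : ∀ n, 0 < r n) (hapos : ∀ n, 0 < a n)
    (hr : Tendsto r atTop (nhds 0)) (ha : Tendsto a atTop atTop)
    (hra : Tendsto (fun n => r n ^ d * a n) atTop atTop) :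
    ∀ M : ℝ, 0 < M →
      Tendsto (fun n => μ {x | a n * (μ (closedBall x (r n))).toReal ≤ M}) atTop (nhds 0) := by
  intro M hM
  set E := EuclideanSpace ℝ (Fin d)
  rw [ENNReal.tendsto_nhds_zero]
  intro ε hε
  have hε2 : (0 : ℝ≥0∞) < ε / 2 := ENNReal.half_pos hε.ne'
  -- choose R with μ((B_R)ᶜ) ≤ ε/2
  obtain ⟨R, hR⟩ : ∃ R : ℕ, μ ((closedBall (0 : E) R)ᶜ) ≤ ε / 2 := by
    have hiter : Tendsto (fun n : ℕ => μ ((closedBall (0 : E) n)ᶜ)) atTop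
        (nhds (μ (⋂ n : ℕ, (closedBall (0 : E) n)ᶜ))) := by
      refine tendsto_measure_iInter_atTop
        (fun n => measurableSet_closedBall.compl.nullMeasurableSet) ?_ ⟨0, measure_ne_top μ _⟩
      intro n m h
      exact compl_subset_compl.mpr (closedBall_subset_closedBall (by exact_mod_cast h))
    have hempty : (⋂ n : ℕ, (closedBall (0 : E) n)ᶜ) = ∅ := by
      ext x
      simp only [mem_iInter, mem_compl_iff, mem_closedBall, not_le, mem_empty_iff_false,
        iff_false, not_forall, not_lt]
      obtain ⟨n, hn⟩ := exists_nat_ge (dist x 0)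
      exact ⟨n, hn⟩
    rw [hempty, measure_empty] at hiter
    exact ((hiter.eventually_lt_const hε2).exists).imp fun R h => h.le
  -- the bound sequence
  set c1 : ℝ≥0∞ := volume (ball (0 : E) 1) with hc1
  have hc10 : c1 ≠ 0 := (measure_ball_pos volume _ one_pos).ne'
  have hc1top : c1 ≠ ∞ := measure_ball_lt_top.ne
  set b : ℕ → ℝ≥0∞ := fun n =>
    ENNReal.ofReal (M / a n) * volume (closedBall (0 : E) ((R : ℝ) + 1))
      / volume (closedBall (0 : E) (r n / 2)) with hbdef
  have hbtend : Tendsto b atTop (nhds 0) := by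
    have heq : ∀ n, b n = ENNReal.ofReal (M * ((R : ℝ) + 1) ^ d * 2 ^ d / (r n ^ d * a n)) := by
      intro n
      have h1 : volume (closedBall (0 : E) ((R : ℝ) + 1))
          = ENNReal.ofReal (((R : ℝ) + 1) ^ d) * c1 := by
        rw [hc1, Measure.addHaar_closedBall volume 0 (by positivity : (0:ℝ) ≤ (R : ℝ) + 1),
          finrank_euclideanSpace_fin]
      have h2 : volume (closedBall (0 : E) (r n / 2))
          = ENNReal.ofReal ((r n / 2) ^ d) * c1 := by
        rw [hc1, Measure.addHaar_closedBall volume 0 (half_pos (hrpos n)).le,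
          finrank_euclideanSpace_fin]
      rw [hbdef]
      simp only
      rw [h1, h2, ← mul_assoc, ENNReal.mul_div_mul_right _ _ hc10 hc1top,
        ← ENNReal.ofReal_mul (div_nonneg hM.le (hapos n).le), ← ENNReal.ofReal_div_of_pos (pow_pos (half_pos (hrpos n)) d)]
      congr 1
      field_simp
      ring_nf
      norm_num
    have hreal : Tendsto (fun n => M * ((R : ℝ) + 1) ^ d * 2 ^ d / (r n ^ d * a n)) atTop
        (nhds 0) := Tendsto.div_atTop tendsto_const_nhds hra
    have := ENNReal.tendsto_ofReal hreal
    rw [ENNReal.ofReal_zero] at this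
    exact Tendsto.congr (fun n => (heq n).symm) this
  have hbsmall : ∀ᶠ n in atTop, b n ≤ ε / 2 :=
    hbtend.eventually_le_const hε2
  have hrsmall : ∀ᶠ n in atTop, r n < 2 := hr.eventually_lt_const two_pos
  filter_upwards [hbsmall, hrsmall] with n hbn hrn
  -- main estimate for fixed n
  set t : ℝ≥0∞ := ENNReal.ofReal (M / a n) with htdef
  have ht0 : t ≠ 0 := by
    rw [htdef]
    simp only [ne_eq, ENNReal.ofReal_eq_zero, not_le]
    exact div_pos hM (hapos n)
  have httop : t ≠ ∞ := ENNReal.ofReal_ne_top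
  have hsub : {x : E | a n * (μ (closedBall x (r n))).toReal ≤ M}
      ⊆ (closedBall (0 : E) R)ᶜ ∪ (closedBall 0 (R : ℝ) ∩ {x | μ (closedBall x (2 * (r n / 2))) ≤ t}) := by
    intro x hx
    by_cases hxR : x ∈ closedBall (0 : E) (R : ℝ)
    · right
      refine ⟨hxR, ?_⟩
      have hx' : (μ (closedBall x (r n))).toReal ≤ M / a n := by
        rw [le_div_iff₀ (hapos n)]
        linarith [mem_setOf_eq ▸ hx, mul_comm (a n) (μ (closedBall x (r n))).toReal]
      have : μ (closedBall x (r n)) ≤ t := by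
        rw [htdef]
        exact (ENNReal.le_ofReal_iff_toReal_le (measure_ne_top μ _)
          (div_nonneg hM.le (hapos n).le)).mpr hx'
      simpa [mul_div_cancel₀ (r n) (two_ne_zero)] using this
    · left; exact hxR
  have hkey := key_bound d μ (r n / 2) R (half_pos (hrpos n)) t ht0 httop
  calc μ {x : E | a n * (μ (closedBall x (r n))).toReal ≤ M}
      ≤ μ ((closedBall (0 : E) R)ᶜ)
        + μ (closedBall 0 (R : ℝ) ∩ {x | μ (closedBall x (2 * (r n / 2))) ≤ t}) :=
        le_trans (measure_mono hsub) (measure_union_le _ _)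
    _ ≤ ε / 2 + t * volume (closedBall (0 : E) ((R : ℝ) + r n / 2))
          / volume (closedBall (0 : E) (r n / 2)) := add_le_add hR hkey
    _ ≤ ε / 2 + b n := by
        refine add_le_add le_rfl ?_
        rw [hbdef]
        simp only
        refine ENNReal.div_le_div_right ?_ _
        rw [htdef]
        gcongr
        linarith
    _ ≤ ε / 2 + ε / 2 := add_le_add le_rfl hbn
    _ = ε := ENNReal.add_halves ε
end
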